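/- Let S be a numerical semigroup with multiplicity m. Define the Apéry saturation operation: from the Apéry set elements {a_0, ..., a_{m-1}} of S with respect to m (taking the representative m in the zero class), form the semigroup Ŝ generated by S together with all elements a_k - m for which there exist a_i, a_j in the Apéry set with a_i + a_j = a_k. Then the iterated sequence S^1 = S, S^{n+1} = Ŝ^n becomes stationary, and the stationary value equals the MED closure MED(S). -/

import Mathlib

/-- A numerical semigroup: an additive submonoid of ℕ with finite complement. -/
structure NumSgp where
  carrier : Set ℕ
  zero_mem : 0 ∈ carrier
  add_mem : ∀ ⦃a b : ℕ⦄, a ∈ carrier → b ∈ carrier → a + b ∈ carrier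
  cofinite : carrierᶜ.Finite

/-- The multiplicity: the smallest nonzero element. -/
noncomputable def NumSgp.mult (S : NumSgp) : ℕ := sInf {n | n ∈ S.carrier ∧ n ≠ 0}

/-- The Apéry set of `S` with respect to `s`: elements `x ∈ S` with `x - s ∉ S`
(over the integers, i.e. there is no `y ∈ S` with `y + s = x`). -/
def NumSgp.Ap (S : NumSgp) (s : ℕ) : Set ℕ :=
  {x | x ∈ S.carrier ∧ ∀ y ∈ S.carrier, y + s ≠ x}

/-- `z` is an Arf element of `S`. -/
def NumSgp.ArfElem (S : NumSgp) (z : ℕ) : Prop :=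
  ∀ x ∈ S.carrier, ∀ y ∈ S.carrier, z ≤ x → z ≤ y → x + y - z ∈ S.carrier

/-- The minimal generating set: nonzero elements not expressible as a sum of two
nonzero elements of `S`. -/
def NumSgp.minGen (S : NumSgp) : Set ℕ :=
  {x | x ∈ S.carrier ∧ x ≠ 0 ∧ ∀ a ∈ S.carrier, ∀ b ∈ S.carrier, a ≠ 0 → b ≠ 0 → a + b ≠ x}

/-- The embedding dimension: the cardinality of the minimal generating set. -/
noncomputable def NumSgp.edim (S : NumSgp) : ℕ := S.minGen.ncard

/-- The Frobenius number: the largest gap. -/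
noncomputable def NumSgp.frob (S : NumSgp) : ℕ := sSup S.carrierᶜ

/-- The conductor: the smallest `c` with `c + ℤ≥0 ⊆ S`. -/
noncomputable def NumSgp.cond (S : NumSgp) : ℕ := sInf {c | ∀ n, c ≤ n → n ∈ S.carrier}

/-- The genus: the number of gaps. -/
noncomputable def NumSgp.genus (S : NumSgp) : ℕ := S.carrierᶜ.ncard

/-- The set of pseudo-Frobenius numbers. -/
def NumSgp.PF (S : NumSgp) : Set ℕ :=
  {x | x ∉ S.carrier ∧ ∀ s ∈ S.carrier, s ≠ 0 → x + s ∈ S.carrier}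

/-- The type of `S`: the number of pseudo-Frobenius numbers. -/
noncomputable def NumSgp.type (S : NumSgp) : ℕ := S.PF.ncard

/-- `S` is a MED semigroup: its multiplicity is an Arf element, i.e. for all
`x, y ∈ S` with `x, y ≥ m(S)`, `x + y - m(S) ∈ S`. -/
def NumSgp.IsMED (S : NumSgp) : Prop := S.ArfElem S.mult

/-- The MED closure of `S`: the intersection of all MED numerical semigroups
containing `S` with the same multiplicity. -/
def NumSgp.MEDclosure (S : NumSgp) : Set ℕ :=
  ⋂ T ∈ {T : NumSgp | S.carrier ⊆ T.carrier ∧ T.mult = S.mult ∧ T.IsMED}, T.carrier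

/-- Multiplicity of a set of naturals. -/
noncomputable def multS (A : Set ℕ) : ℕ := sInf {n | n ∈ A ∧ n ≠ 0}

/-- The modified Apéry set `Âp(A, s)`: elements `x ∈ A` with `x - s` a gap of `A` or zero. -/
def hAp (A : Set ℕ) (s : ℕ) : Set ℕ :=
  {x | x ∈ A ∧ ∃ d : ℕ, x = s + d ∧ (d ∉ A ∨ d = 0)}

/-- The Apéry saturation of `A`: the submonoid generated by `A` together with all
`a_k - m` for triples `a_i + a_j = a_k` of elements of `Âp(A, m)`, `m = m(A)`. -/
def ApSat (A : Set ℕ) : Set ℕ :=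
  ↑(AddSubmonoid.closure (A ∪ {x : ℕ | ∃ ai ∈ hAp A (multS A), ∃ aj ∈ hAp A (multS A),
      ∃ ak ∈ hAp A (multS A), ai + aj = ak ∧ x + multS A = ak}))

/-- The iterated Apéry saturation sequence. -/
def apSatSeq (A : Set ℕ) : ℕ → Set ℕ
  | 0 => A
  | n + 1 => ApSat (apSatSeq A n)

section ApSatProof

/-- The generating set used in the Apéry saturation. -/
def satGen (A : Set ℕ) : Set ℕ :=
  A ∪ {x : ℕ | ∃ ai ∈ hAp A (multS A), ∃ aj ∈ hAp A (multS A),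
      ∃ ak ∈ hAp A (multS A), ai + aj = ak ∧ x + multS A = ak}

lemma apSat_eq (A : Set ℕ) : ApSat A = ↑(AddSubmonoid.closure (satGen A)) := rfl

/-- Invariant maintained along the saturation sequence. -/
structure SatInv (m : ℕ) (A : Set ℕ) : Prop where
  zero_mem : 0 ∈ A
  add_mem : ∀ ⦃a b : ℕ⦄, a ∈ A → b ∈ A → a + b ∈ A
  m_mem : m ∈ A
  m_pos : m ≠ 0
  m_le : ∀ x ∈ A, x ≠ 0 → m ≤ x

lemma SatInv.multS_eq {m : ℕ} {A : Set ℕ} (h : SatInv m A) : multS A = m := by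
  have h1 : multS A ≤ m := Nat.sInf_le ⟨h.m_mem, h.m_pos⟩
  have h2 : m ≤ multS A :=
    le_csInf ⟨m, h.m_mem, h.m_pos⟩ (fun b hb => h.m_le b hb.1 hb.2)
  omega

lemma hAp_mem {A : Set ℕ} {s x : ℕ} (h : x ∈ hAp A s) : x ∈ A := h.1

lemma hAp_ge {A : Set ℕ} {s x : ℕ} (h : x ∈ hAp A s) : s ≤ x := by
  obtain ⟨-, d, rfl, -⟩ := h; omega

lemma subset_apSat (A : Set ℕ) : A ⊆ ApSat A :=
  fun _ hx => AddSubmonoid.subset_closure (Or.inl hx)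

lemma closure_satGen_bound {m : ℕ} {A : Set ℕ} (h : SatInv m A) :
    ∀ y ∈ AddSubmonoid.closure (satGen A), y = 0 ∨ m ≤ y := by
  intro y hy
  induction hy using AddSubmonoid.closure_induction with
  | mem z hz =>
    rcases hz with hz | hz
    · rcases eq_or_ne z 0 with rfl | h0
      · exact Or.inl rfl
      · exact Or.inr (h.m_le z hz h0)
    · obtain ⟨ai, hai, aj, haj, ak, hak, hsum, heq⟩ := hz
      have h1 : multS A ≤ ai := hAp_ge hai
      have h2 : multS A ≤ aj := hAp_ge haj
      rw [h.multS_eq] at h1 h2 heq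
      omega
  | zero => exact Or.inl rfl
  | add a b _ _ iha ihb =>
    rcases iha with rfl | ha
    · rcases ihb with rfl | hb
      · exact Or.inl rfl
      · exact Or.inr (by omega)
    · rcases ihb with rfl | hb
      · exact Or.inr (by omega)
      · exact Or.inr (by omega)

lemma SatInv.apSat {m : ℕ} {A : Set ℕ} (h : SatInv m A) : SatInv m (ApSat A) where
  zero_mem := (AddSubmonoid.closure (satGen A)).zero_mem
  add_mem := fun _ _ ha hb => (AddSubmonoid.closure (satGen A)).add_mem ha hb
  m_mem := subset_apSat A h.m_mem
  m_pos := h.m_pos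
  m_le := by
    intro x hx hx0
    have hx' : x ∈ AddSubmonoid.closure (satGen A) := hx
    rcases closure_satGen_bound h x hx' with rfl | hle
    · exact absurd rfl hx0
    · exact hle

/-- One saturation step stays inside any MED semigroup containing `A` with multiplicity `m`. -/
lemma apSat_subset_med {m : ℕ} {A : Set ℕ} (h : SatInv m A) (T : NumSgp)
    (hT : A ⊆ T.carrier) (hm : T.mult = m) (hmed : T.IsMED) : ApSat A ⊆ T.carrier := by
  intro x hx
  have hx' : x ∈ AddSubmonoid.closure (satGen A) := hx
  let TM : AddSubmonoid ℕ :=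
    { carrier := T.carrier
      zero_mem' := T.zero_mem
      add_mem' := fun ha hb => T.add_mem ha hb }
  have hgen : satGen A ⊆ (TM : Set ℕ) := by
    rintro y (hy | ⟨ai, hai, aj, haj, ak, hak, hsum, heq⟩)
    · exact hT hy
    · have h1 : multS A ≤ ai := hAp_ge hai
      have h2 : multS A ≤ aj := hAp_ge haj
      rw [h.multS_eq] at h1 h2 heq
      have hai' : ai ∈ T.carrier := hT (hAp_mem hai)
      have haj' : aj ∈ T.carrier := hT (hAp_mem haj)
      have hmm := hmed ai hai' aj haj' (by omega) (by omega)
      rw [hm] at hmm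
      have hy' : y = ai + aj - m := by omega
      rw [hy']
      exact hmm
  exact (AddSubmonoid.closure_le.mpr hgen) hx'

/-- Every element `≥ m` of a set satisfying the invariant is `a + k*m` with `a` in `Âp`. -/
lemma rep_hAp {m : ℕ} {L : Set ℕ} (h : SatInv m L) :
    ∀ x, x ∈ L → m ≤ x → ∃ a ∈ hAp L m, ∃ k, x = a + k * m := by
  intro x
  induction x using Nat.strong_induction_on with
  | _ x ih =>
    intro hx hmx
    by_cases hap : x ∈ hAp L m
    · exact ⟨x, hap, 0, by simp⟩
    · have hd : x = m + (x - m) := by omega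
      have hne : ¬ ((x - m) ∉ L ∨ (x - m) = 0) := fun hc => hap ⟨hx, x - m, hd, hc⟩
      push_neg at hne
      obtain ⟨hdL, hd0⟩ := hne
      have hmd : m ≤ x - m := h.m_le _ hdL hd0
      have hmpos : 0 < m := Nat.pos_of_ne_zero h.m_pos
      obtain ⟨a, ha, k, hk⟩ := ih (x - m) (by omega) hdL hmd
      refine ⟨a, ha, k + 1, ?_⟩
      have hkm : (k + 1) * m = k * m + m := by ring
      omega

lemma stationary_med {m : ℕ} {L : Set ℕ} (h : SatInv m L) (hs : ApSat L = L) :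
    ∀ x ∈ L, ∀ y ∈ L, m ≤ x → m ≤ y → x + y - m ∈ L := by
  have hmul : ∀ k, k * m ∈ L := by
    intro k
    induction k with
    | zero => simpa using h.zero_mem
    | succ n ihn => have := h.add_mem ihn h.m_mem; simpa [Nat.succ_mul] using this
  intro x hx y hy hmx hmy
  obtain ⟨ai, hai, k1, rfl⟩ := rep_hAp h x hx hmx
  obtain ⟨aj, haj, k2, rfl⟩ := rep_hAp h y hy hmy
  have hmi : m ≤ ai := hAp_ge hai
  have hmj : m ≤ aj := hAp_ge haj
  have key : ai + aj - m ∈ L := by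
    by_cases hdL : ai + aj - m ∈ L
    · exact hdL
    · have hsL : ai + aj ∈ L := h.add_mem (hAp_mem hai) (hAp_mem haj)
      have hsAp : ai + aj ∈ hAp L m := ⟨hsL, ai + aj - m, by omega, Or.inl hdL⟩
      have hmem : ai + aj - m ∈ ApSat L := by
        rw [apSat_eq]
        refine AddSubmonoid.subset_closure (Or.inr ?_)
        rw [h.multS_eq]
        exact ⟨ai, hai, aj, haj, ai + aj, hsAp, rfl, by omega⟩
      rw [hs] at hmem
      exact hmem
  have heq : ai + k1 * m + (aj + k2 * m) - m = (ai + aj - m) + (k1 * m + k2 * m) := by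
    omega
  rw [heq]
  exact h.add_mem key (h.add_mem (hmul k1) (hmul k2))

end ApSatProof

theorem apery_saturation_reaches_med_closure (S : NumSgp) :
    ∃ l : ℕ, (∀ n, l ≤ n → apSatSeq S.carrier n = apSatSeq S.carrier l) ∧
      apSatSeq S.carrier l = S.MEDclosure := by
  set m := S.mult with hm
  -- m is a nonzero member of S
  have hinf : S.carrier.Infinite := by
    have := Set.Finite.infinite_compl S.cofinite
    rwa [compl_compl] at this
  have hne : {n | n ∈ S.carrier ∧ n ≠ 0}.Nonempty := by
    have : (S.carrier \ {0}).Infinite := hinf.diff (Set.finite_singleton 0)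
    obtain ⟨x, hx⟩ := this.nonempty
    exact ⟨x, hx.1, by simpa using hx.2⟩
  have hmmem : m ∈ {n | n ∈ S.carrier ∧ n ≠ 0} := Nat.sInf_mem hne
  have hInv0 : SatInv m S.carrier :=
    ⟨S.zero_mem, S.add_mem, hmmem.1, hmmem.2, fun x hx hx0 => Nat.sInf_le ⟨hx, hx0⟩⟩
  have hInv : ∀ n, SatInv m (apSatSeq S.carrier n) := by
    intro n
    induction n with
    | zero => exact hInv0
    | succ n ih => exact ih.apSat
  have hmono : ∀ n, apSatSeq S.carrier n ⊆ apSatSeq S.carrier (n + 1) :=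
    fun n => subset_apSat _
  have hsub0 : ∀ n, S.carrier ⊆ apSatSeq S.carrier n := by
    intro n
    induction n with
    | zero => exact subset_rfl
    | succ n ih => exact ih.trans (hmono n)
  have hfin : ∀ n, ((apSatSeq S.carrier n)ᶜ).Finite :=
    fun n => S.cofinite.subset (Set.compl_subset_compl.mpr (hsub0 n))
  -- stabilization
  have hstab : ∃ l, apSatSeq S.carrier (l + 1) = apSatSeq S.carrier l := by
    by_contra hc
    push_neg at hc
    have hdec : ∀ n, ((apSatSeq S.carrier (n + 1))ᶜ).ncard < ((apSatSeq S.carrier n)ᶜ).ncard := by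
      intro n
      refine Set.ncard_lt_ncard ?_ (hfin n)
      refine (Set.compl_subset_compl.mpr (hmono n)).ssubset_of_ne ?_
      intro heq
      exact hc n (by simpa using congrArg (·ᶜ) heq)
    have hb : ∀ n, ((apSatSeq S.carrier n)ᶜ).ncard + n ≤ ((apSatSeq S.carrier 0)ᶜ).ncard := by
      intro n
      induction n with
      | zero => simp
      | succ n ih => have := hdec n; omega
    have := hb (((apSatSeq S.carrier 0)ᶜ).ncard + 1)
    omega
  obtain ⟨l, hl⟩ := hstab
  have hconst : ∀ n, l ≤ n → apSatSeq S.carrier n = apSatSeq S.carrier l := by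
    intro n hn
    induction n, hn using Nat.le_induction with
    | base => rfl
    | succ n hn ih =>
      show ApSat (apSatSeq S.carrier n) = apSatSeq S.carrier l
      rw [ih]
      exact hl
  refine ⟨l, hconst, ?_⟩
  set L := apSatSeq S.carrier l with hL
  have hInvL : SatInv m L := hInv l
  have hstatL : ApSat L = L := hl
  let TL : NumSgp := ⟨L, hInvL.zero_mem, hInvL.add_mem, hfin l⟩
  have hTLmult : TL.mult = m := hInvL.multS_eq
  have hTLmed : TL.IsMED := by
    intro x hx y hy h1 h2
    rw [hTLmult] at h1 h2 ⊢
    exact stationary_med hInvL hstatL x hx y hy h1 h2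
  apply Set.Subset.antisymm
  · intro x hx
    simp only [NumSgp.MEDclosure, Set.mem_iInter, Set.mem_setOf_eq]
    rintro T ⟨hTS, hTm, hTmed⟩
    have hall : ∀ n, apSatSeq S.carrier n ⊆ T.carrier := by
      intro n
      induction n with
      | zero => exact hTS
      | succ n ih => exact apSat_subset_med (hInv n) T ih (by rw [hTm]) hTmed
    exact hall l hx
  · have hTLmem : TL ∈ {T : NumSgp | S.carrier ⊆ T.carrier ∧ T.mult = S.mult ∧ T.IsMED} :=
      ⟨hsub0 l, hTLmult.trans hm, hTLmed⟩
    exact Set.biInter_subset_of_mem hTLmem
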